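/- There exists a constant C > 0 (depending on d, r, p, A) such that for every x with r ≤ ‖x‖ ≤ 1 and every s ∈ (0, 1 − r], ∫_{B(x,2s)} f(y) dy ≤ C ∫_{B(x,s)} f(y) dy. (This doubling property yields condition (3), sup_x F(B(x, 2r̂_n(x))) = O((log n + β)/n), for this density.) -/

import Mathlib

open MeasureTheory Metric

/-- doubling property, cf. eq. (34) of Iyer–Thacker: for the polynomially
vanishing annulus density `f(y) = A(‖y‖ − r)^p` for `r ≤ ‖y‖ ≤ 1` (and `0` otherwise) on
Euclidean `ℝ^d`, there is `C > 0` with `∫_{B(x,2s)} f ≤ C ∫_{B(x,s)} f` for every `x` in the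
annulus and every `0 < s ≤ 1 − r`.  This yields condition (3),
`sup_x F(B(x, 2r̂_n(x))) = O((log n + β)/n)`, for this density. -/
theorem annulus_density_doubling
    (d : ℕ) (hd : 1 ≤ d) (r : ℝ) (hr0 : 0 < r) (hr1 : r < 1)
    (p : ℕ) (hp : 1 ≤ p) (A : ℝ) (hA : 0 < A)
    (f : EuclideanSpace ℝ (Fin d) → ℝ)
    (hf : ∀ y, f y = if r ≤ ‖y‖ ∧ ‖y‖ ≤ 1 then A * (‖y‖ - r) ^ p else 0) :
    ∃ C : ℝ, 0 < C ∧
      ∀ x : EuclideanSpace ℝ (Fin d), r ≤ ‖x‖ → ‖x‖ ≤ 1 →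
        ∀ s : ℝ, 0 < s → s ≤ 1 - r →
          ∫ y in Metric.ball x (2 * s), f y ≤ C * ∫ y in Metric.ball x s, f y := by
  haveI : NeZero d := ⟨by omega⟩
  refine ⟨6 ^ p * 16 ^ d, by positivity, ?_⟩
  intro x hxr hx1 s hs hs1
  have hxpos : (0 : ℝ) < ‖x‖ := lt_of_lt_of_le hr0 hxr
  -- basic properties of f
  have hfm : Measurable f := by
    have hfe : f = fun y => if r ≤ ‖y‖ ∧ ‖y‖ ≤ 1 then A * (‖y‖ - r) ^ p else 0 := funext hf
    rw [hfe]
    exact Measurable.ite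
      ((measurableSet_le measurable_const measurable_norm).inter
        (measurableSet_le measurable_norm measurable_const))
      (continuous_const.mul ((continuous_norm.sub continuous_const).pow p)).measurable
      measurable_const
  have hf0 : ∀ y, 0 ≤ f y := by
    intro y; rw [hf]
    split
    · rename_i h
      exact mul_nonneg hA.le (pow_nonneg (by linarith [h.1]) p)
    · exact le_refl 0
  have hfb : ∀ y, f y ≤ A := by
    intro y; rw [hf]
    split
    · rename_i h
      have h1 : (‖y‖ - r) ^ p ≤ 1 := by
        apply pow_le_one₀ (by linarith [h.1]) (by linarith [h.2])
      calc A * (‖y‖ - r) ^ p ≤ A * 1 := by nlinarith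
        _ = A := mul_one A
    · exact hA.le
  have hint : ∀ (c : EuclideanSpace ℝ (Fin d)) (ρ : ℝ), IntegrableOn f (ball c ρ) := by
    intro c ρ
    apply Measure.integrableOn_of_bounded measure_ball_lt_top.ne hfm.aestronglyMeasurable
    filter_upwards with y
    rw [Real.norm_eq_abs, abs_of_nonneg (hf0 y)]
    exact hfb y
  set V : ℝ := (volume (ball (0 : EuclideanSpace ℝ (Fin d)) 1)).toReal with hVdef
  have hV : 0 < V :=
    ENNReal.toReal_pos (measure_ball_pos volume _ one_pos).ne' measure_ball_lt_top.ne
  have hvol : ∀ (c : EuclideanSpace ℝ (Fin d)) (ρ : ℝ), 0 ≤ ρ →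
      (volume (ball c ρ)).toReal = ρ ^ d * V := by
    intro c ρ hρ
    rw [Measure.addHaar_ball volume c hρ, finrank_euclideanSpace_fin, ENNReal.toReal_mul,
      ENNReal.toReal_ofReal (pow_nonneg hρ d)]
  -- upper bound on the big ball
  have hup : ∫ y in ball x (2 * s), f y ≤ A * ((‖x‖ - r) + 2 * s) ^ p * ((2 * s) ^ d * V) := by
    have h1 : ∫ y in ball x (2 * s), f y ≤
        ∫ _y in ball x (2 * s), A * ((‖x‖ - r) + 2 * s) ^ p := by
      apply setIntegral_mono_on (hint x (2 * s))
        (integrableOn_const measure_ball_lt_top.ne) measurableSet_ball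
      intro y hy
      rw [hf]
      split
      · rename_i h
        have hdy : ‖y‖ - ‖x‖ ≤ dist y x := by
          rw [dist_eq_norm]; exact norm_sub_norm_le y x
        have hyx : dist y x < 2 * s := mem_ball.mp hy
        apply mul_le_mul_of_nonneg_left _ hA.le
        apply pow_le_pow_left₀ (by linarith [h.1]) (by linarith)
      · exact mul_nonneg hA.le (pow_nonneg (by linarith) p)
    rw [setIntegral_const, measureReal_def, hvol x (2 * s) (by positivity), smul_eq_mul] at h1
    exact h1.trans_eq (by ring)
  -- choose a small ball inside the small ball where f is bounded below
  obtain ⟨c, m, hm0, hsub, hbound, hle6⟩ :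
      ∃ (c : EuclideanSpace ℝ (Fin d)) (m : ℝ), 0 < m ∧
        ball c (s / 8) ⊆ ball x s ∧
        (∀ y ∈ ball c (s / 8), (r ≤ ‖y‖ ∧ ‖y‖ ≤ 1) ∧ m ≤ ‖y‖ - r) ∧
        (‖x‖ - r) + 2 * s ≤ 6 * m := by
    rcases le_or_gt s (‖x‖ - r) with hts | hts
    · -- far from the inner boundary: move inward by s/4
      refine ⟨(1 - s / (4 * ‖x‖)) • x, 5 * (‖x‖ - r) / 8, by linarith, ?_, ?_, by linarith⟩
      · have hcoef : 0 ≤ 1 - s / (4 * ‖x‖) := by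
          have hsx : s ≤ ‖x‖ := by linarith
          have : s / (4 * ‖x‖) ≤ 1 := by
            rw [div_le_one (by positivity)]; linarith
          linarith
        have hcx : ‖(1 - s / (4 * ‖x‖)) • x - x‖ = s / 4 := by
          rw [show (1 - s / (4 * ‖x‖)) • x - x = (-(s / (4 * ‖x‖))) • x by module,
            norm_smul, Real.norm_eq_abs, abs_neg, abs_of_nonneg (by positivity)]
          field_simp
        intro y hy
        have h1 : dist y ((1 - s / (4 * ‖x‖)) • x) < s / 8 := mem_ball.mp hy
        have h3 : dist ((1 - s / (4 * ‖x‖)) • x) x = s / 4 := by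
          rw [dist_eq_norm]; exact hcx
        have h2 : dist y x ≤ dist y ((1 - s / (4 * ‖x‖)) • x)
            + dist ((1 - s / (4 * ‖x‖)) • x) x := dist_triangle _ _ _
        rw [h3] at h2
        exact mem_ball.mpr (by linarith)
      · have hcoef : 0 ≤ 1 - s / (4 * ‖x‖) := by
          have hsx : s ≤ ‖x‖ := by linarith
          have : s / (4 * ‖x‖) ≤ 1 := by
            rw [div_le_one (by positivity)]; linarith
          linarith
        have hcn : ‖(1 - s / (4 * ‖x‖)) • x‖ = ‖x‖ - s / 4 := by
          rw [norm_smul, Real.norm_eq_abs, abs_of_nonneg hcoef]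
          field_simp
        intro y hy
        have h1 : dist y ((1 - s / (4 * ‖x‖)) • x) < s / 8 := mem_ball.mp hy
        have h2 : |‖y‖ - ‖(1 - s / (4 * ‖x‖)) • x‖| ≤ ‖y - (1 - s / (4 * ‖x‖)) • x‖ :=
          abs_norm_sub_norm_le _ _
        rw [← dist_eq_norm] at h2
        rw [hcn] at h2
        have h3 := abs_le.mp (h2.trans h1.le)
        refine ⟨⟨by linarith [h3.1], by linarith [h3.2]⟩, by linarith [h3.1]⟩
    · -- close to the inner boundary: center at radius r + 3s/4
      refine ⟨((r + 3 * s / 4) / ‖x‖) • x, 5 * s / 8, by linarith, ?_, ?_, by linarith⟩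
      · have hcx : ‖((r + 3 * s / 4) / ‖x‖) • x - x‖ = |r + 3 * s / 4 - ‖x‖| := by
          rw [show ((r + 3 * s / 4) / ‖x‖) • x - x = ((r + 3 * s / 4) / ‖x‖ - 1) • x by module,
            norm_smul, Real.norm_eq_abs]
          rw [show |(r + 3 * s / 4) / ‖x‖ - 1| * ‖x‖ = |((r + 3 * s / 4) / ‖x‖ - 1) * ‖x‖| by
            rw [abs_mul, abs_of_nonneg (norm_nonneg x)]]
          congr 1
          field_simp
        have hcx2 : ‖((r + 3 * s / 4) / ‖x‖) • x - x‖ ≤ 3 * s / 4 := by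
          rw [hcx]
          exact abs_le.mpr ⟨by linarith, by linarith⟩
        intro y hy
        have h1 : dist y (((r + 3 * s / 4) / ‖x‖) • x) < s / 8 := mem_ball.mp hy
        have h3 : dist (((r + 3 * s / 4) / ‖x‖) • x) x ≤ 3 * s / 4 := by
          rw [dist_eq_norm]; exact hcx2
        have h2 : dist y x ≤ dist y (((r + 3 * s / 4) / ‖x‖) • x)
            + dist (((r + 3 * s / 4) / ‖x‖) • x) x := dist_triangle _ _ _
        exact mem_ball.mpr (by linarith)
      · have hcn : ‖((r + 3 * s / 4) / ‖x‖) • x‖ = r + 3 * s / 4 := by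
          rw [norm_smul, Real.norm_eq_abs, abs_of_nonneg (by positivity)]
          field_simp
        intro y hy
        have h1 : dist y (((r + 3 * s / 4) / ‖x‖) • x) < s / 8 := mem_ball.mp hy
        have h2 : |‖y‖ - ‖((r + 3 * s / 4) / ‖x‖) • x‖| ≤ ‖y - ((r + 3 * s / 4) / ‖x‖) • x‖ :=
          abs_norm_sub_norm_le _ _
        rw [← dist_eq_norm, hcn] at h2
        have h3 := abs_le.mp (h2.trans h1.le)
        refine ⟨⟨by linarith [h3.1], by linarith [h3.2]⟩, by linarith [h3.1]⟩
  -- lower bound on the small ball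
  have hlo : A * m ^ p * ((s / 8) ^ d * V) ≤ ∫ y in ball x s, f y := by
    have h2 : ∫ _y in ball c (s / 8), (A * m ^ p) ≤ ∫ y in ball c (s / 8), f y := by
      apply setIntegral_mono_on (integrableOn_const measure_ball_lt_top.ne)
        (hint c (s / 8)) measurableSet_ball
      intro y hy
      obtain ⟨hy12, hm⟩ := hbound y hy
      rw [hf, if_pos hy12]
      exact mul_le_mul_of_nonneg_left (pow_le_pow_left₀ hm0.le hm p) hA.le
    have h3 : ∫ y in ball c (s / 8), f y ≤ ∫ y in ball x s, f y :=
      setIntegral_mono_set (hint x s) (Filter.Eventually.of_forall hf0)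
        (HasSubset.Subset.eventuallyLE hsub)
    rw [setIntegral_const, measureReal_def, hvol c (s / 8) (by positivity), smul_eq_mul] at h2
    calc A * m ^ p * ((s / 8) ^ d * V) = (s / 8) ^ d * V * (A * m ^ p) := by ring
      _ ≤ ∫ y in ball c (s / 8), f y := h2
      _ ≤ _ := h3
  -- put it together
  have h1 : ((‖x‖ - r) + 2 * s) ^ p ≤ 6 ^ p * m ^ p := by
    rw [← mul_pow]
    exact pow_le_pow_left₀ (by linarith) hle6 p
  have h2 : (2 * s) ^ d = 16 ^ d * (s / 8) ^ d := by
    rw [← mul_pow]; congr 1; ring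
  calc ∫ y in ball x (2 * s), f y
      ≤ A * ((‖x‖ - r) + 2 * s) ^ p * ((2 * s) ^ d * V) := hup
    _ = A * ((‖x‖ - r) + 2 * s) ^ p * (16 ^ d * (s / 8) ^ d * V) := by rw [h2]
    _ ≤ A * (6 ^ p * m ^ p) * (16 ^ d * (s / 8) ^ d * V) := by
        apply mul_le_mul_of_nonneg_right (mul_le_mul_of_nonneg_left h1 hA.le) (by positivity)
    _ = 6 ^ p * 16 ^ d * (A * m ^ p * ((s / 8) ^ d * V)) := by ring
    _ ≤ 6 ^ p * 16 ^ d * ∫ y in ball x s, f y := by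
        apply mul_le_mul_of_nonneg_left hlo (by positivity)
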